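/- arXiv:2504.15640 — 2 statements merged into one kernel-verified Lean document; each statement's English description precedes it below -/
import Mathlib

section
/- Let n and N be natural numbers and let w : ℕ → ℝ be strictly antitone (strictly decreasing). Let A be the set of ordered pairs (a,b) of natural numbers with 1 ≤ a < b ≤ n, and for a pair (a,b) define its SEC score as w(a) + w(b). If S ⊆ A is a finite set with |S| = N that maximizes the total SEC score Σ_{(a,b)∈S} (w(a) + w(b)) among all N-element subsets of A, then every pair (a,b) ∈ S satisfies a ≤ ⌈(√(8N+1) − 1)/2⌉ (where √ is the real square root and ⌈·⌉ is the ceiling). -/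
/-- In any SEC-score-maximizing `N`-element set `S` of pairs `(a,b)` with
`1 ≤ a < b ≤ n` (score of a pair being `w a + w b` for strictly antitone `w`),
every pair `(a,b) ∈ S` satisfies `a ≤ ⌈(√(8N+1) − 1)/2⌉`. -/
theorem stmt_0 (n N : ℕ) (w : ℕ → ℝ) (hw : StrictAnti w)
    (A : Finset (ℕ × ℕ))
    (hA : A = (Finset.Icc 1 n ×ˢ Finset.Icc 1 n).filter fun p => p.1 < p.2)
    (S : Finset (ℕ × ℕ)) (hS : S ⊆ A) (hcard : S.card = N)
    (hmax : ∀ S' ⊆ A, S'.card = N →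
      ∑ p ∈ S', (w p.1 + w p.2) ≤ ∑ p ∈ S, (w p.1 + w p.2)) :
    ∀ p ∈ S, (p.1 : ℤ) ≤ ⌈(Real.sqrt (8 * N + 1) - 1) / 2⌉ := by
  intro p hp
  by_contra hcon
  push_neg at hcon
  set m : ℤ := ⌈(Real.sqrt (8 * N + 1) - 1) / 2⌉ with hm
  -- m ≥ 0
  have h1le : (1 : ℝ) ≤ Real.sqrt (8 * N + 1) := by
    nlinarith [Real.sq_sqrt (show (0:ℝ) ≤ 8 * (N:ℝ) + 1 by positivity),
      Real.sqrt_nonneg (8 * (N:ℝ) + 1), (Nat.cast_nonneg N : (0:ℝ) ≤ (N:ℝ))]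
  have hm0 : 0 ≤ m := by
    apply Int.ceil_nonneg
    linarith
  -- key numeric inequality: 2N ≤ m*(m+1)
  have hsq : (Real.sqrt (8 * N + 1)) ≤ 2 * (m : ℝ) + 1 := by
    have := Int.le_ceil ((Real.sqrt (8 * N + 1) - 1) / 2)
    rw [← hm] at this
    linarith
  have hkey : (2 * N : ℤ) ≤ m * (m + 1) := by
    have hs : (0:ℝ) ≤ 8 * N + 1 := by positivity
    have h2 : (8 * N + 1 : ℝ) ≤ (2 * (m:ℝ) + 1) ^ 2 := by
      have := Real.sq_sqrt hs
      nlinarith [Real.sqrt_nonneg (8 * (N:ℝ) + 1)]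
    have h3 : (8 * N + 1 : ℝ) ≤ ((2 * m + 1 : ℤ) : ℝ) ^ 2 := by push_cast; linarith
    have h4 : (8 * N + 1 : ℤ) ≤ (2 * m + 1) ^ 2 := by exact_mod_cast h3
    nlinarith
  obtain ⟨a, b⟩ := p
  simp only at hcon ⊢
  -- a ≥ m + 1 in ℕ
  set k : ℕ := m.toNat with hk
  have hkm : (k : ℤ) = m := Int.toNat_of_nonneg hm0
  have hak : k + 1 ≤ a := by
    have : (k : ℤ) < (a : ℤ) := by rw [hkm]; exact hcon
    exact_mod_cast this
  have hkeyN : 2 * N ≤ k * (k + 1) := by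
    have : (2 * N : ℤ) ≤ (k : ℤ) * ((k : ℤ) + 1) := by rw [hkm]; exact hkey
    exact_mod_cast this
  -- facts about (a,b)
  have hpA := hS hp
  rw [hA] at hpA
  simp only [Finset.mem_filter, Finset.mem_product, Finset.mem_Icc] at hpA
  obtain ⟨⟨⟨ha1, han⟩, ⟨hb1, hbn⟩⟩, hab⟩ := hpA
  -- the set of small pairs
  set s : Finset ℕ := Finset.Icc 1 a with hsdef
  set B : Finset (ℕ × ℕ) := (s ×ˢ s).filter (fun q => q.1 < q.2) with hB
  set C : Finset (ℕ × ℕ) := (s ×ˢ s).filter (fun q => q.2 < q.1) with hC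
  have hcardBC : B.card = C.card := by
    apply Finset.card_bij (fun q _ => Prod.swap q)
    · intro q hq
      simp only [hB, hC, Finset.mem_filter, Finset.mem_product] at hq ⊢
      exact ⟨⟨hq.1.2, hq.1.1⟩, hq.2⟩
    · intro q₁ _ q₂ _ h
      exact Prod.swap_injective h
    · intro q hq
      refine ⟨Prod.swap q, ?_, by simp⟩
      simp only [hB, hC, Finset.mem_filter, Finset.mem_product] at hq ⊢
      exact ⟨⟨hq.1.2, hq.1.1⟩, hq.2⟩
  have hunion : B ∪ C = s.offDiag := by
    ext q
    simp only [hB, hC, Finset.mem_union, Finset.mem_filter, Finset.mem_product,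
      Finset.mem_offDiag]
    constructor
    · rintro (⟨⟨h1, h2⟩, h3⟩ | ⟨⟨h1, h2⟩, h3⟩)
      · exact ⟨h1, h2, Nat.ne_of_lt h3⟩
      · exact ⟨h1, h2, (Nat.ne_of_lt h3).symm⟩
    · rintro ⟨h1, h2, h3⟩
      rcases lt_or_gt_of_ne h3 with h | h
      · exact Or.inl ⟨⟨h1, h2⟩, h⟩
      · exact Or.inr ⟨⟨h1, h2⟩, h⟩
  have hdisj : Disjoint B C := by
    rw [Finset.disjoint_left]
    intro q hq hq'
    simp only [hB, hC, Finset.mem_filter] at hq hq'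
    omega
  have hscard : s.card = a := by
    rw [hsdef, Nat.card_Icc]; omega
  have hcard2 : 2 * B.card = a * a - a := by
    have := Finset.card_union_of_disjoint hdisj
    rw [hunion, Finset.offDiag_card, hscard, hcardBC] at this
    omega
  have hNB : N ≤ B.card := by
    have h1 : (k + 1) * k ≤ a * (a - 1) := Nat.mul_le_mul hak (by omega)
    have h2 : a * (a - 1) = a * a - a := by
      cases a with
      | zero => simp
      | succ t =>
        simp only [Nat.succ_mul, Nat.mul_succ, Nat.succ_sub_one]
        omega
    have h3 : k * (k + 1) = (k + 1) * k := Nat.mul_comm _ _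
    omega
  -- (a,b) ∉ B
  have hpB : (a, b) ∉ B := by
    simp only [hB, Finset.mem_filter, Finset.mem_product, hsdef, Finset.mem_Icc]
    intro h
    omega
  have hN1 : 1 ≤ N := by
    rw [← hcard]; exact Finset.card_pos.mpr ⟨(a, b), hp⟩
  -- find q ∈ B \ S
  have hex : ∃ q ∈ B, q ∉ S := by
    by_contra hno
    push_neg at hno
    have hBS : B ⊆ S := hno
    have hBS' : B ⊆ S.erase (a, b) := by
      intro q hq
      rw [Finset.mem_erase]
      refine ⟨?_, hBS hq⟩
      rintro rfl
      exact hpB hq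
    have := Finset.card_le_card hBS'
    rw [Finset.card_erase_of_mem hp, hcard] at this
    omega
  obtain ⟨q, hqB, hqS⟩ := hex
  obtain ⟨x, y⟩ := q
  simp only [hB, Finset.mem_filter, Finset.mem_product, hsdef, Finset.mem_Icc] at hqB
  obtain ⟨⟨⟨hx1, hxa⟩, ⟨hy1, hya⟩⟩, hxy⟩ := hqB
  -- build S'
  set S' : Finset (ℕ × ℕ) := insert (x, y) (S.erase (a, b)) with hS'
  have hxyS : (x, y) ∉ S.erase (a, b) := fun h => hqS (Finset.mem_of_mem_erase h)
  have hS'card : S'.card = N := by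
    rw [hS', Finset.card_insert_of_notMem hxyS, Finset.card_erase_of_mem hp, hcard]
    have : 1 ≤ N := by rw [← hcard]; exact Finset.card_pos.mpr ⟨(a, b), hp⟩
    omega
  have hS'A : S' ⊆ A := by
    intro r hr
    rw [hS', Finset.mem_insert] at hr
    rcases hr with rfl | hr
    · rw [hA]
      simp only [Finset.mem_filter, Finset.mem_product, Finset.mem_Icc]
      omega
    · exact hS (Finset.mem_of_mem_erase hr)
  have hsum := hmax S' hS'A hS'card
  rw [hS', Finset.sum_insert hxyS] at hsum
  have hbase := Finset.sum_erase_add S (fun r => w r.1 + w r.2) hp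
  simp only at hbase
  have hwx : w a < w x := hw (by omega)
  have hwy : w b < w y := hw (by omega)
  linarith
end

section
/- Let n be a natural number and let w : ℕ → ℝ be strictly antitone. For any pair (a,b) with 1 ≤ a < b ≤ n, the number of pairs (a',b') with 1 ≤ a' < b' ≤ n, (a',b') ≠ (a,b), and w(a') + w(b') > w(a) + w(b) is at least a(a+1)/2 − 1. -/
lemma gauss_Icc (a : ℕ) : (∑ x ∈ Finset.Icc 1 a, x) * 2 = a * (a + 1) := by
  induction a with
  | zero => simp
  | succ k ih =>
    rw [Finset.sum_Icc_succ_top (by omega), add_mul, ih]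
    ring


/-- For strictly antitone `w` and a pair `(a,b)` with `1 ≤ a < b ≤ n`,
the number of pairs `(a',b')` with `1 ≤ a' < b' ≤ n`, `(a',b') ≠ (a,b)`, and
`w a' + w b' > w a + w b` is at least `a(a+1)/2 − 1`. -/
theorem stmt_1 (n : ℕ) (w : ℕ → ℝ) (hw : StrictAnti w)
    (a b : ℕ) (ha : 1 ≤ a) (hab : a < b) (hb : b ≤ n) :
    a * (a + 1) / 2 - 1 ≤
      (((Finset.Icc 1 n ×ˢ Finset.Icc 1 n).filter fun p =>
        p.1 < p.2 ∧ p ≠ (a, b) ∧ w a + w b < w p.1 + w p.2).card) := by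
  classical
  set T := ((Finset.Icc 1 n ×ˢ Finset.Icc 1 n).filter fun p =>
        p.1 < p.2 ∧ p ≠ (a, b) ∧ w a + w b < w p.1 + w p.2) with hT
  let e : (Σ _ : ℕ, ℕ) ↪ ℕ × ℕ :=
    ⟨fun p => (p.1, p.2), by
      rintro ⟨x, y⟩ ⟨x', y'⟩ h
      simp only [Prod.mk.injEq] at h
      simp [h.1, h.2]⟩
  set V : Finset (ℕ × ℕ) :=
    ((Finset.Icc 1 a).sigma fun x => Finset.Ioc x (a + 1)).map e with hV
  have hmemV : ∀ p : ℕ × ℕ, p ∈ V ↔ 1 ≤ p.1 ∧ p.1 ≤ a ∧ p.1 < p.2 ∧ p.2 ≤ a + 1 := by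
    rintro ⟨x, y⟩
    simp only [hV, Finset.mem_map, Finset.mem_sigma, Finset.mem_Icc, Finset.mem_Ioc]
    constructor
    · rintro ⟨⟨u, v⟩, ⟨⟨h1, h2⟩, h3, h4⟩, hh⟩
      simp only [e, Function.Embedding.coeFn_mk, Prod.mk.injEq] at hh
      obtain ⟨rfl, rfl⟩ := hh
      exact ⟨h1, h2, h3, h4⟩
    · rintro ⟨h1, h2, h3, h4⟩
      exact ⟨⟨x, y⟩, ⟨⟨h1, h2⟩, h3, h4⟩, rfl⟩
  have hsub : V.erase (a, b) ⊆ T := by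
    intro p hp
    have hpne : p ≠ (a, b) := Finset.ne_of_mem_erase hp
    have hpV := Finset.mem_of_mem_erase hp
    rw [hmemV] at hpV
    obtain ⟨h1, h2, h3, h4⟩ := hpV
    have hb1 : 1 ≤ p.2 := lt_of_le_of_lt h1 h3 |>.le.trans' (by omega)
    have hp2b : p.2 ≤ b := by omega
    have hsum : w a + w b < w p.1 + w p.2 := by
      rcases eq_or_lt_of_le h2 with h2e | h2l
      · have hne2 : p.2 ≠ b := by
          intro hb2
          exact hpne (Prod.ext h2e hb2)
        have : p.2 < b := lt_of_le_of_ne hp2b hne2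
        have := hw this
        have h' := hw.antitone h2
        linarith
      · have := hw h2l
        have h' := hw.antitone hp2b
        linarith
    rw [hT, Finset.mem_filter, Finset.mem_product, Finset.mem_Icc, Finset.mem_Icc]
    exact ⟨⟨⟨h1, by omega⟩, ⟨hb1, by omega⟩⟩, h3, hpne, hsum⟩
  have hcardV : V.card * 2 = a * (a + 1) := by
    rw [hV, Finset.card_map, Finset.card_sigma]
    have hsum : ∀ x ∈ Finset.Icc 1 a, (Finset.Ioc x (a + 1)).card = a + 1 - x := by
      intro x hx
      rw [Nat.card_Ioc]
    rw [Finset.sum_congr rfl hsum]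
    have hrefl : ∑ x ∈ Finset.Icc 1 a, (a + 1 - x) = ∑ x ∈ Finset.Icc 1 a, x := by
      apply Finset.sum_nbij' (fun x => a + 1 - x) (fun x => a + 1 - x) <;>
        intro x hx <;> simp only [Finset.mem_Icc] at * <;> omega
    rw [hrefl, gauss_Icc]
  have h1 : V.card - 1 ≤ (V.erase (a, b)).card := Finset.pred_card_le_card_erase
  have h2 : (V.erase (a, b)).card ≤ T.card := Finset.card_le_card hsub
  omega
end
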